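/- arXiv:math/0502482 — 2 statements merged into one kernel-verified Lean document; each statement's English description precedes it below -/
import Mathlib

section
/- (Polar decomposition, part b: surjectivity onto ℂPᴺ.) Let N ≥ 1. For every point p of the complex projective space ℂPᴺ = ℙ(ℂ^{N+1}) there exist θ ∈ ℝ and a matrix k in SU(N+1) of the block-diagonal form diag((det A)⁻¹, A) with A ∈ U(N), such that p is the projective class of the vector k · (cos θ, sin θ, 0, …, 0) ∈ ℂ^{N+1}. -/
open Matrix

/-- The block-diagonal matrix `diag(λ, A)` of size `(N+1) × (N+1)`. -/
def blkDiag {N : ℕ} (lam : ℂ) (A : Matrix (Fin N) (Fin N) ℂ) :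
    Matrix (Fin (N + 1)) (Fin (N + 1)) ℂ :=
  Matrix.of (Fin.cons (Fin.cons lam 0) (fun i => Fin.cons 0 (A i)))

/-- The vector `(cos θ, sin θ, 0, …, 0) ∈ ℂ^{N+1}` parametrizing the maximal torus. -/
noncomputable def torusVec (N : ℕ) (θ : ℝ) : Fin (N + 1) → ℂ :=
  fun i => if i = 0 then (Real.cos θ : ℂ) else if i = 1 then (Real.sin θ : ℂ) else 0

lemma mulVec_blkDiag {N : ℕ} [NeZero N] (lam : ℂ) (A : Matrix (Fin N) (Fin N) ℂ) (θ : ℝ) :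
    (blkDiag lam A).mulVec (torusVec N θ) =
    Fin.cons (lam * Real.cos θ) (fun i => (Real.sin θ : ℂ) * A i 0) := by
  unfold blkDiag torusVec
  funext i
  refine Fin.cases ?_ ?_ i
  · simp [Matrix.mulVec, dotProduct, Fin.sum_univ_succ]
  · intro k
    simp only [Matrix.mulVec, dotProduct, Fin.sum_univ_succ, Matrix.of_apply,
      Fin.cons_succ, Fin.cons_zero, Pi.zero_apply, zero_mul, mul_zero, if_pos rfl,
      Fin.succ_ne_zero, if_neg, ite_false]
    have h1 : ∀ j : Fin N, (Fin.succ j = (1 : Fin (N+1))) ↔ j = 0 := by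
      intro j
      rw [← Fin.succ_zero_eq_one', Fin.succ_inj]
    simp only [h1]
    rw [Finset.sum_congr rfl (fun j _ => by rw [mul_ite, mul_zero]), Finset.sum_ite_eq']
    simp [mul_comm]

lemma exists_unitary_col {N : ℕ} [NeZero N] (u : EuclideanSpace ℂ (Fin N)) (hu : ‖u‖ = 1) :
    ∃ A ∈ Matrix.unitaryGroup (Fin N) ℂ, ∀ i, A i 0 = u i := by
  have hcard : Module.finrank ℂ (EuclideanSpace ℂ (Fin N)) = Fintype.card (Fin N) := by simp
  have horth : Orthonormal ℂ (({0} : Set (Fin N)).restrict (fun _ => u)) := by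
    constructor
    · intro i; exact hu
    · intro i j hij
      exact absurd (Subtype.ext ((Set.mem_singleton_iff.mp i.2).trans
        (Set.mem_singleton_iff.mp j.2).symm)) hij
  obtain ⟨b, hb⟩ := horth.exists_orthonormalBasis_extension_of_card_eq hcard
  refine ⟨Matrix.of (fun i j => b j i), ?_, fun i => by
    simp [hb 0 rfl]⟩
  rw [Matrix.mem_unitaryGroup_iff']
  ext j k
  have := orthonormal_iff_ite.mp b.orthonormal j k
  simp only [PiLp.inner_apply, RCLike.inner_apply] at this
  simp only [Matrix.mul_apply, Matrix.star_apply, Matrix.of_apply, Matrix.one_apply, star]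
  simpa [mul_comm] using this

/-- Polar decomposition, part b: every point of `ℂPᴺ` is the projective class of
`k · (cos θ, sin θ, 0, …, 0)` for some `θ ∈ ℝ` and some `k = diag((det A)⁻¹, A) ∈ K₀`
with `A ∈ U(N)`. -/
theorem polar_decomposition_CPn (N : ℕ) (hN : 1 ≤ N)
    (p : Projectivization ℂ (Fin (N + 1) → ℂ)) :
    ∃ (θ : ℝ) (A : Matrix (Fin N) (Fin N) ℂ)
      (_ : A ∈ Matrix.unitaryGroup (Fin N) ℂ)
      (h : (blkDiag (A.det)⁻¹ A).mulVec (torusVec N θ) ≠ 0),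
      p = Projectivization.mk ℂ ((blkDiag (A.det)⁻¹ A).mulVec (torusVec N θ)) h := by
  haveI : NeZero N := ⟨by omega⟩
  have hvne := p.rep_nonzero
  set v : Fin (N+1) → ℂ := p.rep with hvdef
  have hp : p = Projectivization.mk ℂ v hvne := (Projectivization.mk_rep p).symm
  have key : ∀ (θ : ℝ) (A : Matrix (Fin N) (Fin N) ℂ)
      (_ : A ∈ Matrix.unitaryGroup (Fin N) ℂ) (c : ℂ), c ≠ 0 →
      c • (blkDiag (A.det)⁻¹ A).mulVec (torusVec N θ) = v →
      ∃ (θ' : ℝ) (A' : Matrix (Fin N) (Fin N) ℂ)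
        (_ : A' ∈ Matrix.unitaryGroup (Fin N) ℂ)
        (h : (blkDiag (A'.det)⁻¹ A').mulVec (torusVec N θ') ≠ 0),
        p = Projectivization.mk ℂ ((blkDiag (A'.det)⁻¹ A').mulVec (torusVec N θ')) h := by
    intro θ A hA c hc hcv
    have hx : (blkDiag (A.det)⁻¹ A).mulVec (torusVec N θ) ≠ 0 := by
      intro h0
      rw [h0, smul_zero] at hcv
      exact hvne hcv.symm
    refine ⟨θ, A, hA, hx, hp.trans ?_⟩
    exact ((Projectivization.mk_eq_mk_iff ℂ _ _ hvne hx).mpr ⟨Units.mk0 c hc, hcv⟩)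
  by_cases hw : ∀ i : Fin N, v i.succ = 0
  · -- the point is [e₀]
    have hv0 : v 0 ≠ 0 := by
      intro h0
      exact hvne (funext fun i => Fin.cases h0 hw i)
    refine key 0 1 (one_mem _) (v 0) hv0 ?_
    rw [mulVec_blkDiag]
    funext i
    refine Fin.cases ?_ ?_ i
    · simp
    · intro k; simp [hw k]
  · push_neg at hw
    obtain ⟨i₀, hi₀⟩ := hw
    set W : EuclideanSpace ℂ (Fin N) := WithLp.toLp 2 (fun i : Fin N => v i.succ) with hWdef
    have hWne : W ≠ 0 := by
      intro h
      exact hi₀ (by simpa [hWdef] using congrArg (fun w : EuclideanSpace ℂ (Fin N) => w i₀) h)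
    set r := ‖W‖ with hrdef
    have hr : 0 < r := norm_pos_iff.mpr hWne
    have hrC : (r : ℂ) ≠ 0 := Complex.ofReal_ne_zero.mpr hr.ne'
    set u : EuclideanSpace ℂ (Fin N) := (r : ℂ)⁻¹ • W with hudef
    have hu : ‖u‖ = 1 := by
      rw [hudef, norm_smul, norm_inv, Complex.norm_real, Real.norm_eq_abs,
        abs_of_pos hr, ← hrdef, inv_mul_cancel₀ hr.ne']
    obtain ⟨A, hA, hcol⟩ := exists_unitary_col u hu
    have hucoord : ∀ i, A i 0 = (r : ℂ)⁻¹ * v i.succ := by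
      intro i; rw [hcol i, hudef]; rfl
    have hAd : (starRingEnd ℂ) A.det * A.det = 1 := by
      have h1 : star A * A = 1 := Matrix.mem_unitaryGroup_iff'.mp hA
      have h2 := congrArg Matrix.det h1
      rwa [Matrix.det_mul, Matrix.det_one, Matrix.star_eq_conjTranspose,
        Matrix.det_conjTranspose] at h2
    have hdne : A.det ≠ 0 := by
      intro h; rw [h, mul_zero] at hAd; exact zero_ne_one hAd
    have habs : ‖A.det‖ = 1 := by
      have h2 := congrArg norm hAd
      rw [norm_mul, Complex.norm_conj, norm_one] at h2
      rcases mul_self_eq_one_iff.mp h2 with h | h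
      · exact h
      · linarith [norm_nonneg A.det]
    by_cases hv0 : v 0 = 0
    · -- θ = π/2
      refine key (Real.pi/2) A hA (r : ℂ) hrC ?_
      rw [mulVec_blkDiag]
      funext i
      refine Fin.cases ?_ ?_ i
      · simp [hv0]
      · intro k
        simp only [Pi.smul_apply, Fin.cons_succ, smul_eq_mul, Real.sin_pi_div_two,
          Complex.ofReal_one, one_mul, hucoord k]
        field_simp
    · -- general position
      set s := ‖v 0‖ with hsdef
      have hs : 0 < s := norm_pos_iff.mpr hv0
      set θ := Real.arctan (r / s) with hθdef
      have hcosθ : 0 < Real.cos θ := Real.cos_arctan_pos _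
      have hrel : s * Real.sin θ = r * Real.cos θ := by
        have h1 : Real.sin θ = Real.tan θ * Real.cos θ := by
          rw [Real.tan_eq_sin_div_cos]; field_simp
        rw [h1, hθdef, Real.tan_arctan]
        field_simp
      have hsinθ : 0 < Real.sin θ := by
        have h2 : 0 < r * Real.cos θ := by positivity
        rw [← hrel] at h2
        nlinarith
      have hsinC : ((Real.sin θ : ℝ) : ℂ) ≠ 0 := Complex.ofReal_ne_zero.mpr hsinθ.ne'
      set z : ℂ := (s : ℂ) / (A.det * v 0) with hzdef
      have hz : z ≠ 0 :=
        div_ne_zero (Complex.ofReal_ne_zero.mpr hs.ne') (mul_ne_zero hdne hv0)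
      set μ : ℂ := z ^ ((1 : ℂ)/2) with hμdef
      have hμ2 : μ * μ = z := by
        rw [hμdef, ← Complex.cpow_add _ _ hz]
        norm_num
      have hμ : μ ≠ 0 := by
        intro h; rw [h, mul_zero] at hμ2; exact hz hμ2.symm
      have hμ2' : μ * μ * (A.det * v 0) = (s : ℂ) := by
        rw [hμ2, hzdef, div_mul_cancel₀]
        exact mul_ne_zero hdne hv0
      have hμconj : μ * (starRingEnd ℂ) μ = 1 := by
        have h1 : ‖μ‖ ^ 2 = 1 := by
          rw [sq, ← norm_mul, hμ2, hzdef, norm_div, norm_mul, habs, Complex.norm_real, Real.norm_eq_abs,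
            abs_of_pos hs, one_mul, ← hsdef, div_self hs.ne']
        rw [Complex.mul_conj, Complex.normSq_eq_norm_sq, h1, Complex.ofReal_one]
      set D : Matrix (Fin N) (Fin N) ℂ :=
        Matrix.diagonal (fun j => if j = 0 then μ else 1) with hDdef
      have hD : D ∈ Matrix.unitaryGroup (Fin N) ℂ := by
        rw [Matrix.mem_unitaryGroup_iff, hDdef, Matrix.star_eq_conjTranspose,
          Matrix.diagonal_conjTranspose, Matrix.diagonal_mul_diagonal]
        ext j k
        by_cases hjk : j = k
        · subst hjk
          by_cases hj : j = 0 <;>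
            simp [Matrix.diagonal_apply_eq, Matrix.one_apply, hj, hμconj, Complex.star_def]
        · simp [Matrix.diagonal_apply_ne _ hjk, Matrix.one_apply, hjk]
      have hdet : (A * D).det = A.det * μ := by
        rw [Matrix.det_mul, hDdef, Matrix.det_diagonal,
          Finset.prod_ite_eq' Finset.univ (0 : Fin N) (fun _ => μ)]
        simp
      have hcol' : ∀ i, (A * D) i 0 = (r : ℂ)⁻¹ * v i.succ * μ := by
        intro i
        rw [hDdef, Matrix.mul_diagonal, if_pos rfl, hucoord i]
      refine key θ (A * D) (mul_mem hA hD) ((r : ℂ) / (μ * Real.sin θ))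
        (div_ne_zero hrC (mul_ne_zero hμ hsinC)) ?_
      rw [mulVec_blkDiag, hdet]
      funext i
      refine Fin.cases ?_ ?_ i
      · simp only [Pi.smul_apply, Fin.cons_zero, smul_eq_mul]
        have hrelC : ((s : ℝ) : ℂ) * Real.sin θ = (r : ℂ) * Real.cos θ := by
          exact_mod_cast congrArg Complex.ofReal hrel
        rw [div_mul_eq_mul_div, div_eq_iff (mul_ne_zero hμ hsinC), inv_mul_eq_div,
          mul_div_assoc', div_eq_iff (mul_ne_zero hdne hμ)]
        linear_combination (-(Real.sin θ : ℂ)) * hμ2' - hrelC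
      · intro k
        simp only [Pi.smul_apply, Fin.cons_succ, smul_eq_mul, hcol' k]
        rw [div_mul_eq_mul_div, div_eq_iff (mul_ne_zero hμ hsinC)]
        linear_combination ((Real.sin θ : ℂ) * v k.succ * μ) * (mul_inv_cancel₀ hrC)
end

section
/- Let Ω ⊆ ℂ be open and let W : Ω → ℂ be twice continuously differentiable and satisfy the ℂP¹ sigma model equation ∂∂̄W = (2·conj(W)/(1+|W|²))·∂W·∂̄W on Ω. Then the hermitian projector-valued map P(ξ) := 1₂ − (1/(1+|W(ξ)|²))·[[1, conj(W(ξ))],[W(ξ), |W(ξ)|²]] satisfies [∂∂̄P(ξ), P(ξ)] = 0 for every ξ ∈ Ω. -/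
open Matrix Complex

attribute [local instance] Matrix.frobeniusNormedAddCommGroup Matrix.frobeniusNormedSpace

/-- The Wirtinger derivative `∂F(ξ) = (1/2)(DF(ξ)(1) − i·DF(ξ)(i))`. -/
noncomputable def wd {E : Type*} [NormedAddCommGroup E] [NormedSpace ℂ E]
    (F : ℂ → E) (ξ : ℂ) : E :=
  (2 : ℂ)⁻¹ • (fderiv ℝ F ξ 1 - Complex.I • fderiv ℝ F ξ Complex.I)

/-- The Wirtinger derivative `∂̄F(ξ) = (1/2)(DF(ξ)(1) + i·DF(ξ)(i))`. -/
noncomputable def wdbar {E : Type*} [NormedAddCommGroup E] [NormedSpace ℂ E]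
    (F : ℂ → E) (ξ : ℂ) : E :=
  (2 : ℂ)⁻¹ • (fderiv ℝ F ξ 1 + Complex.I • fderiv ℝ F ξ Complex.I)

section helpers

variable {E F : Type*} [NormedAddCommGroup E] [NormedSpace ℂ E]
  [NormedAddCommGroup F] [NormedSpace ℂ F]

private lemma wd_congr {f g : ℂ → E} {ξ : ℂ} (h : f =ᶠ[nhds ξ] g) : wd f ξ = wd g ξ := by
  simp only [wd, h.fderiv_eq]

private lemma wdbar_congr {f g : ℂ → E} {ξ : ℂ} (h : f =ᶠ[nhds ξ] g) :
    wdbar f ξ = wdbar g ξ := by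
  simp only [wdbar, h.fderiv_eq]

private lemma wd_add {f g : ℂ → E} {ξ : ℂ} (hf : DifferentiableAt ℝ f ξ)
    (hg : DifferentiableAt ℝ g ξ) :
    wd (fun z => f z + g z) ξ = wd f ξ + wd g ξ := by
  simp only [wd, fderiv_fun_add hf hg, ContinuousLinearMap.add_apply]
  module

private lemma wdbar_add {f g : ℂ → E} {ξ : ℂ} (hf : DifferentiableAt ℝ f ξ)
    (hg : DifferentiableAt ℝ g ξ) :
    wdbar (fun z => f z + g z) ξ = wdbar f ξ + wdbar g ξ := by
  simp only [wdbar, fderiv_fun_add hf hg, ContinuousLinearMap.add_apply]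
  module

private lemma wd_clm_comp (L : E →L[ℂ] F) {f : ℂ → E} {ξ : ℂ}
    (hf : DifferentiableAt ℝ f ξ) : wd (fun z => L (f z)) ξ = L (wd f ξ) := by
  have h : fderiv ℝ (⇑(L.restrictScalars ℝ) ∘ f) ξ
      = ((L.restrictScalars ℝ)).comp (fderiv ℝ f ξ) := by
    rw [fderiv_comp ξ (L.restrictScalars ℝ).differentiableAt hf,
      ContinuousLinearMap.fderiv]
  simp only [wd]
  rw [show (fun z => L (f z)) = (⇑(L.restrictScalars ℝ) ∘ f) from rfl, h]
  simp [map_sub, _root_.map_smul]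

private lemma wdbar_clm_comp (L : E →L[ℂ] F) {f : ℂ → E} {ξ : ℂ}
    (hf : DifferentiableAt ℝ f ξ) : wdbar (fun z => L (f z)) ξ = L (wdbar f ξ) := by
  have h : fderiv ℝ (⇑(L.restrictScalars ℝ) ∘ f) ξ
      = ((L.restrictScalars ℝ)).comp (fderiv ℝ f ξ) := by
    rw [fderiv_comp ξ (L.restrictScalars ℝ).differentiableAt hf,
      ContinuousLinearMap.fderiv]
  simp only [wdbar]
  rw [show (fun z => L (f z)) = (⇑(L.restrictScalars ℝ) ∘ f) from rfl, h]
  simp [map_add, _root_.map_smul]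

private lemma wd_const (c : E) (ξ : ℂ) : wd (fun _ => c) ξ = 0 := by
  simp [wd]

private lemma wdbar_const (c : E) (ξ : ℂ) : wdbar (fun _ => c) ξ = 0 := by
  simp [wdbar]

private lemma wd_neg {f : ℂ → E} {ξ : ℂ} : wd (fun z => -f z) ξ = -wd f ξ := by
  simp only [wd, fderiv_fun_neg, ContinuousLinearMap.neg_apply]
  module

private lemma wdbar_neg {f : ℂ → E} {ξ : ℂ} : wdbar (fun z => -f z) ξ = -wdbar f ξ := by
  simp only [wdbar, fderiv_fun_neg, ContinuousLinearMap.neg_apply]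
  module

private lemma wd_mul {f g : ℂ → ℂ} {ξ : ℂ} (hf : DifferentiableAt ℝ f ξ)
    (hg : DifferentiableAt ℝ g ξ) :
    wd (fun z => f z * g z) ξ = f ξ * wd g ξ + g ξ * wd f ξ := by
  simp only [wd, fderiv_fun_mul hf hg, ContinuousLinearMap.add_apply,
    ContinuousLinearMap.smul_apply, smul_eq_mul]
  ring

private lemma wdbar_mul {f g : ℂ → ℂ} {ξ : ℂ} (hf : DifferentiableAt ℝ f ξ)
    (hg : DifferentiableAt ℝ g ξ) :
    wdbar (fun z => f z * g z) ξ = f ξ * wdbar g ξ + g ξ * wdbar f ξ := by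
  simp only [wdbar, fderiv_fun_mul hf hg, ContinuousLinearMap.add_apply,
    ContinuousLinearMap.smul_apply, smul_eq_mul]
  ring

private lemma wd_conj {f : ℂ → ℂ} {ξ : ℂ} (hf : DifferentiableAt ℝ f ξ) :
    wd (fun z => (starRingEnd ℂ) (f z)) ξ = (starRingEnd ℂ) (wdbar f ξ) := by
  have h : fderiv ℝ (⇑Complex.conjCLE ∘ f) ξ
      = (Complex.conjCLE : ℂ →L[ℝ] ℂ).comp (fderiv ℝ f ξ) :=
    Complex.conjCLE.comp_fderiv
  have e : (fun z => (starRingEnd ℂ) (f z)) = (⇑Complex.conjCLE ∘ f) := rfl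
  simp only [wd, wdbar, e, h, ContinuousLinearMap.coe_comp', Function.comp_apply,
    ContinuousLinearEquiv.coe_coe, Complex.conjCLE_apply, smul_eq_mul]
  simp only [_root_.map_mul, map_sub, _root_.map_add, map_inv₀, Complex.conj_I, map_ofNat]
  ring

private lemma wdbar_conj {f : ℂ → ℂ} {ξ : ℂ} (hf : DifferentiableAt ℝ f ξ) :
    wdbar (fun z => (starRingEnd ℂ) (f z)) ξ = (starRingEnd ℂ) (wd f ξ) := by
  have h : fderiv ℝ (⇑Complex.conjCLE ∘ f) ξ
      = (Complex.conjCLE : ℂ →L[ℝ] ℂ).comp (fderiv ℝ f ξ) :=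
    Complex.conjCLE.comp_fderiv
  have e : (fun z => (starRingEnd ℂ) (f z)) = (⇑Complex.conjCLE ∘ f) := rfl
  simp only [wd, wdbar, e, h, ContinuousLinearMap.coe_comp', Function.comp_apply,
    ContinuousLinearEquiv.coe_coe, Complex.conjCLE_apply, smul_eq_mul]
  simp only [_root_.map_mul, map_sub, _root_.map_add, map_inv₀, Complex.conj_I, map_ofNat]
  ring

private lemma wd_inv {f : ℂ → ℂ} {ξ : ℂ} (hf : DifferentiableAt ℝ f ξ) (h0 : f ξ ≠ 0) :
    wd (fun z => (f z)⁻¹) ξ = -((f ξ * f ξ)⁻¹) * wd f ξ := by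
  have h : fderiv ℝ (Inv.inv ∘ f) ξ
      = (fderiv ℝ (Inv.inv : ℂ → ℂ) (f ξ)).comp (fderiv ℝ f ξ) :=
    fderiv_comp ξ (differentiableAt_inv h0) hf
  rw [fderiv_inv' h0] at h
  simp only [wd]
  rw [show (fun z => (f z)⁻¹) = (Inv.inv ∘ f) from rfl, h]
  simp only [ContinuousLinearMap.coe_comp', Function.comp_apply,
    ContinuousLinearMap.neg_apply, ContinuousLinearMap.mulLeftRight_apply, smul_eq_mul,
    mul_inv]
  ring

private lemma wdbar_inv {f : ℂ → ℂ} {ξ : ℂ} (hf : DifferentiableAt ℝ f ξ) (h0 : f ξ ≠ 0) :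
    wdbar (fun z => (f z)⁻¹) ξ = -((f ξ * f ξ)⁻¹) * wdbar f ξ := by
  have h : fderiv ℝ (Inv.inv ∘ f) ξ
      = (fderiv ℝ (Inv.inv : ℂ → ℂ) (f ξ)).comp (fderiv ℝ f ξ) :=
    fderiv_comp ξ (differentiableAt_inv h0) hf
  rw [fderiv_inv' h0] at h
  simp only [wdbar]
  rw [show (fun z => (f z)⁻¹) = (Inv.inv ∘ f) from rfl, h]
  simp only [ContinuousLinearMap.coe_comp', Function.comp_apply,
    ContinuousLinearMap.neg_apply, ContinuousLinearMap.mulLeftRight_apply, smul_eq_mul,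
    mul_inv]
  ring

end helpers
section second

private lemma differentiableAt_wd {W : ℂ → ℂ} {ξ : ℂ} (h : ContDiffAt ℝ 2 W ξ) :
    DifferentiableAt ℝ (fun z => wd W z) ξ := by
  have hf' : DifferentiableAt ℝ (fderiv ℝ W) ξ :=
    (h.fderiv_right (m := 1) (by norm_num)).differentiableAt (by norm_num)
  simp only [wd]
  exact ((hf'.clm_apply (differentiableAt_const _)).sub
    ((hf'.clm_apply (differentiableAt_const _)).const_smul Complex.I)).const_smul
    ((2 : ℂ)⁻¹)

private lemma differentiableAt_wdbar {W : ℂ → ℂ} {ξ : ℂ} (h : ContDiffAt ℝ 2 W ξ) :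
    DifferentiableAt ℝ (fun z => wdbar W z) ξ := by
  have hf' : DifferentiableAt ℝ (fderiv ℝ W) ξ :=
    (h.fderiv_right (m := 1) (by norm_num)).differentiableAt (by norm_num)
  simp only [wdbar]
  exact ((hf'.clm_apply (differentiableAt_const _)).add
    ((hf'.clm_apply (differentiableAt_const _)).const_smul Complex.I)).const_smul
    ((2 : ℂ)⁻¹)

private lemma wdbar_wd_comm {W : ℂ → ℂ} {ξ : ℂ} (h : ContDiffAt ℝ 2 W ξ) :
    wdbar (fun z => wd W z) ξ = wd (fun z => wdbar W z) ξ := by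
  have hf' : DifferentiableAt ℝ (fderiv ℝ W) ξ :=
    (h.fderiv_right (m := 1) (by norm_num)).differentiableAt (by norm_num)
  set H := fderiv ℝ (fderiv ℝ W) ξ with hH
  have hsym : H 1 Complex.I = H Complex.I 1 := h.isSymmSndFDerivAt (by norm_num) 1 Complex.I
  have hA : ∀ w : ℂ, fderiv ℝ (fun z => fderiv ℝ W z w) ξ = H.flip w := by
    intro w
    rw [fderiv_clm_apply hf' (differentiableAt_const w)]
    simp
    rfl
  have hdA : ∀ w : ℂ, DifferentiableAt ℝ (fun z => fderiv ℝ W z w) ξ := fun w =>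
    hf'.clm_apply (differentiableAt_const w)
  have key : ∀ (s : ℂ) (v : ℂ),
      fderiv ℝ (fun z => (2 : ℂ)⁻¹ • (fderiv ℝ W z 1 + s • fderiv ℝ W z Complex.I)) ξ v
        = (2 : ℂ)⁻¹ • (H v 1 + s • H v Complex.I) := by
    intro s v
    rw [fderiv_fun_const_smul (((hdA 1).fun_add ((hdA Complex.I).fun_const_smul s))) ((2:ℂ)⁻¹)]
    rw [fderiv_fun_add (hdA 1) ((hdA Complex.I).fun_const_smul s)]
    rw [fderiv_fun_const_smul (hdA Complex.I) s]
    simp only [ContinuousLinearMap.smul_apply, ContinuousLinearMap.add_apply, hA,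
      ContinuousLinearMap.flip_apply]
  have e1 : (fun z => wd W z) = fun z =>
      (2 : ℂ)⁻¹ • (fderiv ℝ W z 1 + (-Complex.I) • fderiv ℝ W z Complex.I) := by
    funext z; simp only [wd]; module
  have e2 : (fun z => wdbar W z) = fun z =>
      (2 : ℂ)⁻¹ • (fderiv ℝ W z 1 + Complex.I • fderiv ℝ W z Complex.I) := by
    funext z; simp only [wdbar]
  rw [e1, e2, wdbar, wd]
  rw [key, key, key, key]
  simp only [smul_eq_mul]
  linear_combination (-(Complex.I)/2) * hsym
end second

section matrixdecomp

private noncomputable def emb (i j : Fin 2) : ℂ →L[ℂ] Matrix (Fin 2) (Fin 2) ℂ :=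
  LinearMap.toContinuousLinearMap
    { toFun := fun c => Matrix.of fun i' j' => if i' = i ∧ j' = j then c else 0
      map_add' := by
        intro x y
        ext i' j'
        by_cases h : i' = i ∧ j' = j <;> simp [Matrix.add_apply, h]
      map_smul' := by
        intro m x
        ext i' j'
        by_cases h : i' = i ∧ j' = j <;> simp [Matrix.smul_apply, h] }

private lemma emb_apply (i j : Fin 2) (c : ℂ) (i' j' : Fin 2) :
    emb i j c i' j' = if i' = i ∧ j' = j then c else 0 := rfl

private lemma emb_decomp (a b c d : ℂ) :
    emb 0 0 a + emb 0 1 b + emb 1 0 c + emb 1 1 d = !![a, b; c, d] := by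
  ext i' j'
  fin_cases i' <;> fin_cases j' <;>
    simp [Matrix.add_apply, emb_apply, Fin.ext_iff]

private lemma emb_diff (i j : Fin 2) {f : ℂ → ℂ} {ξ : ℂ} (hf : DifferentiableAt ℝ f ξ) :
    DifferentiableAt ℝ (fun z => emb i j (f z)) ξ :=
  ((emb i j).restrictScalars ℝ).differentiableAt.comp ξ hf

private lemma wd_matrix {f00 f01 f10 f11 : ℂ → ℂ} {ξ : ℂ}
    (h00 : DifferentiableAt ℝ f00 ξ) (h01 : DifferentiableAt ℝ f01 ξ)
    (h10 : DifferentiableAt ℝ f10 ξ) (h11 : DifferentiableAt ℝ f11 ξ) :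
    wd (fun z => emb 0 0 (f00 z) + emb 0 1 (f01 z) + emb 1 0 (f10 z) + emb 1 1 (f11 z)) ξ
      = !![wd f00 ξ, wd f01 ξ; wd f10 ξ, wd f11 ξ] := by
  rw [wd_add (((emb_diff _ _ h00).fun_add (emb_diff _ _ h01)).fun_add (emb_diff _ _ h10))
    (emb_diff _ _ h11),
    wd_add ((emb_diff _ _ h00).fun_add (emb_diff _ _ h01)) (emb_diff _ _ h10),
    wd_add (emb_diff _ _ h00) (emb_diff _ _ h01)]
  erw [
    wd_clm_comp (emb 0 0) h00, wd_clm_comp (emb 0 1) h01, wd_clm_comp (emb 1 0) h10, wd_clm_comp (emb 1 1) h11,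
    emb_decomp]

private lemma wdbar_matrix {f00 f01 f10 f11 : ℂ → ℂ} {ξ : ℂ}
    (h00 : DifferentiableAt ℝ f00 ξ) (h01 : DifferentiableAt ℝ f01 ξ)
    (h10 : DifferentiableAt ℝ f10 ξ) (h11 : DifferentiableAt ℝ f11 ξ) :
    wdbar (fun z => emb 0 0 (f00 z) + emb 0 1 (f01 z) + emb 1 0 (f10 z) + emb 1 1 (f11 z)) ξ
      = !![wdbar f00 ξ, wdbar f01 ξ; wdbar f10 ξ, wdbar f11 ξ] := by
  rw [wdbar_add (((emb_diff _ _ h00).fun_add (emb_diff _ _ h01)).fun_add (emb_diff _ _ h10))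
    (emb_diff _ _ h11),
    wdbar_add ((emb_diff _ _ h00).fun_add (emb_diff _ _ h01)) (emb_diff _ _ h10),
    wdbar_add (emb_diff _ _ h00) (emb_diff _ _ h01)]
  erw [
    wdbar_clm_comp (emb 0 0) h00, wdbar_clm_comp (emb 0 1) h01, wdbar_clm_comp (emb 1 0) h10, wdbar_clm_comp (emb 1 1) h11,
    emb_decomp]

private lemma matrix_diff {f00 f01 f10 f11 : ℂ → ℂ} {ξ : ℂ}
    (h00 : DifferentiableAt ℝ f00 ξ) (h01 : DifferentiableAt ℝ f01 ξ)
    (h10 : DifferentiableAt ℝ f10 ξ) (h11 : DifferentiableAt ℝ f11 ξ) :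
    DifferentiableAt ℝ
      (fun z => emb 0 0 (f00 z) + emb 0 1 (f01 z) + emb 1 0 (f10 z) + emb 1 1 (f11 z)) ξ :=
  (((emb_diff _ _ h00).add (emb_diff _ _ h01)).add (emb_diff _ _ h10)).add (emb_diff _ _ h11)

end matrixdecomp

set_option maxHeartbeats 2000000

/-- If `W` solves the `ℂP¹` sigma model equation
`∂∂̄W = (2 conj(W)/(1+|W|²)) ∂W ∂̄W` on an open set `Ω`, then the projector-valued map
`P = 1 − (1/(1+|W|²))·[[1, conj W],[W, |W|²]]` satisfies `[∂∂̄P, P] = 0` on `Ω`. -/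
theorem CP1_equation_matrix_form (Ω : Set ℂ) (hΩ : IsOpen Ω)
    (W : ℂ → ℂ) (hW : ContDiffOn ℝ 2 W Ω)
    (hEL : ∀ ξ ∈ Ω, wd (fun z => wdbar W z) ξ
      = 2 * (starRingEnd ℂ) (W ξ) / (1 + (Complex.normSq (W ξ) : ℂ))
        * wd W ξ * wdbar W ξ)
    (P : ℂ → Matrix (Fin 2) (Fin 2) ℂ)
    (hP : P = fun ξ => 1 - ((1 : ℂ) + (Complex.normSq (W ξ) : ℂ))⁻¹
      • !![1, (starRingEnd ℂ) (W ξ); W ξ, (Complex.normSq (W ξ) : ℂ)]) :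
    ∀ ξ ∈ Ω, wd (fun z => wdbar P z) ξ * P ξ - P ξ * wd (fun z => wdbar P z) ξ = 0 := by
  intro ξ hξ
  have hΩn : Ω ∈ nhds ξ := hΩ.mem_nhds hξ
  have hW2 : ContDiffAt ℝ 2 W ξ := hW.contDiffAt hΩn
  -- the denominator function, kept opaque
  obtain ⟨gf, hgf⟩ : ∃ g : ℂ → ℂ, g = fun z => 1 + W z * (starRingEnd ℂ) (W z) := ⟨_, rfl⟩
  have hgns : ∀ z : ℂ, (1 : ℂ) + (Complex.normSq (W z) : ℂ) = gf z := by
    intro z; rw [hgf]; simp [Complex.mul_conj]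
  have h0 : ∀ z : ℂ, gf z ≠ 0 := by
    intro z
    rw [← hgns z, ← Complex.ofReal_one, ← Complex.ofReal_add]
    exact Complex.ofReal_ne_zero.2 (by have := Complex.normSq_nonneg (W z); intro h; linarith)
  -- differentiability of the basic functions
  have hWd : ∀ z ∈ Ω, DifferentiableAt ℝ W z := fun z hz =>
    (hW.contDiffAt (hΩ.mem_nhds hz)).differentiableAt (by norm_num)
  have hVd : ∀ z ∈ Ω, DifferentiableAt ℝ (fun w => (starRingEnd ℂ) (W w)) z := fun z hz =>
    Complex.conjCLE.differentiableAt.comp z (hWd z hz)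
  have hGd : ∀ z ∈ Ω, DifferentiableAt ℝ gf z := by
    intro z hz
    rw [hgf]
    exact (differentiableAt_const _).add ((hWd z hz).mul (hVd z hz))
  have hGid : ∀ z ∈ Ω, DifferentiableAt ℝ (fun w => (gf w)⁻¹) z := fun z hz =>
    (hGd z hz).inv (h0 z)
  -- entry functions of P
  obtain ⟨f00, hf00⟩ : ∃ f : ℂ → ℂ, f = fun w => 1 + -((gf w)⁻¹) := ⟨_, rfl⟩
  obtain ⟨f01, hf01⟩ : ∃ f : ℂ → ℂ, f = fun w => -((starRingEnd ℂ) (W w) * (gf w)⁻¹) := ⟨_, rfl⟩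
  obtain ⟨f10, hf10⟩ : ∃ f : ℂ → ℂ, f = fun w => -(W w * (gf w)⁻¹) := ⟨_, rfl⟩
  obtain ⟨f11, hf11⟩ : ∃ f : ℂ → ℂ, f = fun w => (gf w)⁻¹ := ⟨_, rfl⟩
  have hf00d : ∀ z ∈ Ω, DifferentiableAt ℝ f00 z := by
    intro z hz; rw [hf00]; exact (differentiableAt_const _).add (hGid z hz).neg
  have hf01d : ∀ z ∈ Ω, DifferentiableAt ℝ f01 z := by
    intro z hz; rw [hf01]; exact ((hVd z hz).mul (hGid z hz)).neg
  have hf10d : ∀ z ∈ Ω, DifferentiableAt ℝ f10 z := by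
    intro z hz; rw [hf10]; exact ((hWd z hz).mul (hGid z hz)).neg
  have hf11d : ∀ z ∈ Ω, DifferentiableAt ℝ f11 z := fun z hz => by
    rw [hf11]; exact hGid z hz
  -- decomposition of P
  have hPd : P = fun z => emb 0 0 (f00 z) + emb 0 1 (f01 z) + emb 1 0 (f10 z)
      + emb 1 1 (f11 z) := by
    rw [hP]
    funext z
    rw [emb_decomp, hf00, hf01, hf10, hf11, hgf]
    have h0' : (1 : ℂ) + (Complex.normSq (W z) : ℂ) ≠ 0 := by
      rw [hgns z]; exact h0 z
    rw [← Complex.mul_conj] at h0'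
    ext i j
    fin_cases i <;> fin_cases j <;>
      simp only [Matrix.sub_apply, Matrix.smul_apply, Matrix.one_apply, Fin.zero_eta, Fin.mk_one, Matrix.of_apply, ite_true, ite_false, zero_ne_one, one_ne_zero, Matrix.cons_val',
        Matrix.cons_val_zero, Matrix.cons_val_one, Matrix.head_cons, Matrix.head_fin_const,
        Matrix.empty_val', Matrix.cons_val_fin_one, smul_eq_mul, Fin.isValue,
        ← Complex.mul_conj] <;>
      · first
        | rfl
        | (field_simp; try ring)
  -- first derivatives (on Ω)
  have hGbar : ∀ z ∈ Ω, wdbar gf z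
      = W z * (starRingEnd ℂ) (wd W z) + (starRingEnd ℂ) (W z) * wdbar W z := by
    intro z hz
    rw [hgf,
      wdbar_add (differentiableAt_const (1:ℂ)) ((hWd z hz).fun_mul (hVd z hz)),
      wdbar_const, wdbar_mul (hWd z hz) (hVd z hz), wdbar_conj (hWd z hz)]
    ring
  obtain ⟨B11f, hB11f⟩ : ∃ f : ℂ → ℂ, f = fun z => -((gf z * gf z)⁻¹)
      * (W z * (starRingEnd ℂ) (wd W z) + (starRingEnd ℂ) (W z) * wdbar W z) := ⟨_, rfl⟩
  obtain ⟨B01f, hB01f⟩ : ∃ f : ℂ → ℂ, f = fun z =>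
      -((starRingEnd ℂ) (W z) * B11f z + (gf z)⁻¹ * (starRingEnd ℂ) (wd W z)) := ⟨_, rfl⟩
  obtain ⟨B10f, hB10f⟩ : ∃ f : ℂ → ℂ, f = fun z =>
      -(W z * B11f z + (gf z)⁻¹ * wdbar W z) := ⟨_, rfl⟩
  obtain ⟨B00f, hB00f⟩ : ∃ f : ℂ → ℂ, f = fun z => -(B11f z) := ⟨_, rfl⟩
  have hGinvbar : ∀ z ∈ Ω, wdbar (fun w => (gf w)⁻¹) z = B11f z := by
    intro z hz
    rw [wdbar_inv (hGd z hz) (h0 z), hGbar z hz]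
    simp only [hB11f]
  have hb00 : ∀ z ∈ Ω, wdbar f00 z = B00f z := by
    intro z hz
    rw [hf00, wdbar_add (differentiableAt_const (1:ℂ)) (hGid z hz).fun_neg, wdbar_const,
      wdbar_neg, hGinvbar z hz]
    simp only [hB00f, zero_add]
  have hb01 : ∀ z ∈ Ω, wdbar f01 z = B01f z := by
    intro z hz
    rw [hf01, wdbar_neg, wdbar_mul (hVd z hz) (hGid z hz), hGinvbar z hz,
      wdbar_conj (hWd z hz)]
    simp only [hB01f]
  have hb10 : ∀ z ∈ Ω, wdbar f10 z = B10f z := by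
    intro z hz
    rw [hf10, wdbar_neg, wdbar_mul (hWd z hz) (hGid z hz), hGinvbar z hz]
    simp only [hB10f]
  have hb11 : ∀ z ∈ Ω, wdbar f11 z = B11f z := by
    intro z hz
    rw [hf11]
    exact hGinvbar z hz
  -- wdbar P on Ω
  have hwdbarP : ∀ z ∈ Ω, wdbar P z = emb 0 0 (B00f z) + emb 0 1 (B01f z)
      + emb 1 0 (B10f z) + emb 1 1 (B11f z) := by
    intro z hz
    rw [hPd, wdbar_matrix (hf00d z hz) (hf01d z hz) (hf10d z hz) (hf11d z hz),
      hb00 z hz, hb01 z hz, hb10 z hz, hb11 z hz, emb_decomp]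
  -- differentiability at ξ of the second-level data
  have hafd : DifferentiableAt ℝ (fun z => wd W z) ξ := differentiableAt_wd hW2
  have hbfd : DifferentiableAt ℝ (fun z => wdbar W z) ξ := differentiableAt_wdbar hW2
  have hcafd : DifferentiableAt ℝ (fun z => (starRingEnd ℂ) (wd W z)) ξ :=
    Complex.conjCLE.differentiableAt.comp ξ hafd
  have hB11fd : DifferentiableAt ℝ B11f ξ := by
    rw [hB11f]
    exact ((((hGd ξ hξ).mul (hGd ξ hξ)).inv (mul_ne_zero (h0 ξ) (h0 ξ))).neg).mul
      (((hWd ξ hξ).mul hcafd).add ((hVd ξ hξ).mul hbfd))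
  have hB01fd : DifferentiableAt ℝ B01f ξ := by
    rw [hB01f]
    exact (((hVd ξ hξ).mul hB11fd).add ((hGid ξ hξ).mul hcafd)).neg
  have hB10fd : DifferentiableAt ℝ B10f ξ := by
    rw [hB10f]
    exact (((hWd ξ hξ).mul hB11fd).add ((hGid ξ hξ).mul hbfd)).neg
  have hB00fd : DifferentiableAt ℝ B00f ξ := by
    rw [hB00f]; exact hB11fd.neg
  -- values of first derivatives at ξ
  have hv : wd (fun w => (starRingEnd ℂ) (W w)) ξ = (starRingEnd ℂ) (wdbar W ξ) :=
    wd_conj (hWd ξ hξ)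
  have hgd : wd gf ξ = W ξ * (starRingEnd ℂ) (wdbar W ξ) + (starRingEnd ℂ) (W ξ) * wd W ξ := by
    rw [hgf, wd_add (differentiableAt_const (1:ℂ)) ((hWd ξ hξ).fun_mul (hVd ξ hξ)), wd_const,
      wd_mul (hWd ξ hξ) (hVd ξ hξ), hv]
    ring
  have hc : wd (fun z => wdbar W z) ξ
      = 2 * (starRingEnd ℂ) (W ξ) / gf ξ * wd W ξ * wdbar W ξ := by
    rw [← hgns ξ]; exact hEL ξ hξ
  have hcc : wd (fun z => (starRingEnd ℂ) (wd W z)) ξ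
      = (starRingEnd ℂ) (2 * (starRingEnd ℂ) (W ξ) / gf ξ * wd W ξ * wdbar W ξ) := by
    rw [wd_conj hafd, wdbar_wd_comm hW2, hc]
  -- second derivatives at ξ
  have h0e : (1 : ℂ) + W ξ * (starRingEnd ℂ) (W ξ) ≠ 0 := by
    have := h0 ξ; rwa [hgf] at this
  have h0e2 : (1 : ℂ) + (starRingEnd ℂ) (W ξ) * W ξ ≠ 0 := by
    rw [mul_comm]; exact h0e
  have n11 : wd B11f ξ = (wd W ξ * (starRingEnd ℂ) (wd W ξ)
        + wdbar W ξ * (starRingEnd ℂ) (wdbar W ξ))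
      * (W ξ * (starRingEnd ℂ) (W ξ) - 1)
      / ((1 + W ξ * (starRingEnd ℂ) (W ξ)) * (1 + W ξ * (starRingEnd ℂ) (W ξ))
        * (1 + W ξ * (starRingEnd ℂ) (W ξ))) := by
    rw [hB11f,
      wd_mul ((((hGd ξ hξ).fun_mul (hGd ξ hξ)).fun_inv (mul_ne_zero (h0 ξ) (h0 ξ))).fun_neg)
        (((hWd ξ hξ).fun_mul hcafd).fun_add ((hVd ξ hξ).fun_mul hbfd)),
      wd_add ((hWd ξ hξ).fun_mul hcafd) ((hVd ξ hξ).fun_mul hbfd),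
      wd_mul (hWd ξ hξ) hcafd, wd_mul (hVd ξ hξ) hbfd,
      wd_neg, wd_inv ((hGd ξ hξ).fun_mul (hGd ξ hξ)) (mul_ne_zero (h0 ξ) (h0 ξ)),
      wd_mul (hGd ξ hξ) (hGd ξ hξ), hgd, hcc, hc, hv]
    simp only [hgf, _root_.map_mul, map_div₀, _root_.map_add, _root_.map_one, map_ofNat,
      Complex.conj_conj]
    try rw [show (1 : ℂ) + (starRingEnd ℂ) (W ξ) * W ξ = 1 + W ξ * (starRingEnd ℂ) (W ξ) from by
      ring]
    field_simp
    try rw [div_eq_iff (by simp [mul_eq_zero, h0e])]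
    try rw [eq_div_iff (by simp [mul_eq_zero, h0e])]
    ring
  have n01 : wd B01f ξ = 2 * (starRingEnd ℂ) (W ξ)
      * (wd W ξ * (starRingEnd ℂ) (wd W ξ) + wdbar W ξ * (starRingEnd ℂ) (wdbar W ξ))
      / ((1 + W ξ * (starRingEnd ℂ) (W ξ)) * (1 + W ξ * (starRingEnd ℂ) (W ξ))
        * (1 + W ξ * (starRingEnd ℂ) (W ξ))) := by
    rw [hB01f, wd_neg,
      wd_add ((hVd ξ hξ).fun_mul hB11fd) ((hGid ξ hξ).fun_mul hcafd),
      wd_mul (hVd ξ hξ) hB11fd, wd_mul (hGid ξ hξ) hcafd,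
      wd_inv (hGd ξ hξ) (h0 ξ), hgd, n11, hcc, hv, hB11f]
    simp only [hgf, _root_.map_mul, map_div₀, _root_.map_add, _root_.map_one, map_ofNat,
      Complex.conj_conj]
    try rw [show (1 : ℂ) + (starRingEnd ℂ) (W ξ) * W ξ = 1 + W ξ * (starRingEnd ℂ) (W ξ) from by
      ring]
    field_simp
    try rw [div_eq_iff (by simp [mul_eq_zero, h0e])]
    try rw [eq_div_iff (by simp [mul_eq_zero, h0e])]
    ring
  have n10 : wd B10f ξ = 2 * W ξ
      * (wd W ξ * (starRingEnd ℂ) (wd W ξ) + wdbar W ξ * (starRingEnd ℂ) (wdbar W ξ))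
      / ((1 + W ξ * (starRingEnd ℂ) (W ξ)) * (1 + W ξ * (starRingEnd ℂ) (W ξ))
        * (1 + W ξ * (starRingEnd ℂ) (W ξ))) := by
    rw [hB10f, wd_neg,
      wd_add ((hWd ξ hξ).fun_mul hB11fd) ((hGid ξ hξ).fun_mul hbfd),
      wd_mul (hWd ξ hξ) hB11fd, wd_mul (hGid ξ hξ) hbfd,
      wd_inv (hGd ξ hξ) (h0 ξ), hgd, n11, hc, hB11f]
    simp only [hgf, _root_.map_mul, map_div₀, _root_.map_add, _root_.map_one, map_ofNat,
      Complex.conj_conj]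
    try rw [show (1 : ℂ) + (starRingEnd ℂ) (W ξ) * W ξ = 1 + W ξ * (starRingEnd ℂ) (W ξ) from by
      ring]
    field_simp
    try rw [div_eq_iff (by simp [mul_eq_zero, h0e])]
    try rw [eq_div_iff (by simp [mul_eq_zero, h0e])]
    ring
  have n00 : wd B00f ξ = -((wd W ξ * (starRingEnd ℂ) (wd W ξ)
        + wdbar W ξ * (starRingEnd ℂ) (wdbar W ξ))
      * (W ξ * (starRingEnd ℂ) (W ξ) - 1)
      / ((1 + W ξ * (starRingEnd ℂ) (W ξ)) * (1 + W ξ * (starRingEnd ℂ) (W ξ))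
        * (1 + W ξ * (starRingEnd ℂ) (W ξ)))) := by
    rw [hB00f, wd_neg, n11]
  -- assemble
  have hEE : (fun z => wdbar P z) =ᶠ[nhds ξ] (fun z => emb 0 0 (B00f z) + emb 0 1 (B01f z)
      + emb 1 0 (B10f z) + emb 1 1 (B11f z)) :=
    Filter.eventuallyEq_of_mem hΩn (fun z hz => hwdbarP z hz)
  have hGmat : wd (fun z => wdbar P z) ξ
      = !![wd B00f ξ, wd B01f ξ; wd B10f ξ, wd B11f ξ] :=
    (wd_congr hEE).trans (wd_matrix hB00fd hB01fd hB10fd hB11fd)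
  have hPξ : P ξ = !![f00 ξ, f01 ξ; f10 ξ, f11 ξ] := by
    rw [hPd, ← emb_decomp]
  rw [hGmat, hPξ, n00, n01, n10, n11, hf00, hf01, hf10, hf11]
  simp only [hgf]
  ext i j
  fin_cases i <;> fin_cases j <;>
    · simp only [Matrix.sub_apply, Matrix.mul_apply, Fin.sum_univ_two, Fin.zero_eta, Fin.mk_one, Matrix.of_apply, Matrix.cons_val',
        Matrix.cons_val_zero, Matrix.cons_val_one, Matrix.head_cons, Matrix.head_fin_const,
        Matrix.empty_val', Matrix.cons_val_fin_one, Matrix.zero_apply, Fin.isValue]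
      try rw [show (1 : ℂ) + (starRingEnd ℂ) (W ξ) * W ξ = 1 + W ξ * (starRingEnd ℂ) (W ξ) from by
        ring]
      field_simp
      try rw [div_eq_iff (by simp [mul_eq_zero, h0e])]
      try rw [eq_div_iff (by simp [mul_eq_zero, h0e])]
      ring
end
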